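/- arXiv:2512.02083 — 2 statements merged into one kernel-verified Lean document; each statement's English description precedes it below -/
import Mathlib

section
/- Let G be a finite simple graph, let r be a vertex of degree 1 whose unique neighbor is v, and let f be a signed Roman dominating function on G with f(v) = −1 and f(r) = 2. Then the function g defined by g(v) = 2, g(r) = −1, and g(u) = f(u) for every other vertex u is also a signed Roman dominating function on G, and g has the same weight as f. -/
open scoped Classical

noncomputable section

/-- Sum of `f` over the closed neighborhood of `u`. -/
def closedNbrSum {V : Type*} [Fintype V] (G : SimpleGraph V) (f : V → ℤ) (u : V) : ℤ :=
  f u + ∑ v ∈ Finset.univ.filter (fun v => G.Adj u v), f v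

/-- A signed Roman dominating function. -/
def IsSRDF {V : Type*} [Fintype V] (G : SimpleGraph V) (f : V → ℤ) : Prop :=
  (∀ v, f v = -1 ∨ f v = 1 ∨ f v = 2) ∧
  (∀ u, 1 ≤ closedNbrSum G f u) ∧
  (∀ u, f u = -1 → ∃ v, G.Adj u v ∧ f v = 2)

/-- The weight of a labeling. -/
def srdWeight {V : Type*} [Fintype V] (f : V → ℤ) : ℤ := ∑ v, f v

theorem swap_pendant_srdf {V : Type*} [Fintype V] [DecidableEq V]
    (G : SimpleGraph V) (r v : V)
    (hdeg : G.degree r = 1) (hadj : G.Adj r v)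
    (f : V → ℤ) (hf : IsSRDF G f) (hfv : f v = -1) (hfr : f r = 2) :
    IsSRDF G (fun u => if u = v then 2 else if u = r then -1 else f u) ∧
    srdWeight (fun u => if u = v then 2 else if u = r then -1 else f u) = srdWeight f := by
  have hrv : r ≠ v := G.ne_of_adj hadj
  have huniq : ∀ x, G.Adj r x → x = v := by
    intro x hx
    obtain ⟨a, ha⟩ := Finset.card_eq_one.mp (hdeg : (G.neighborFinset r).card = 1)
    have hv : v ∈ G.neighborFinset r := by simpa using hadj
    have hx' : x ∈ G.neighborFinset r := by simpa using hx
    rw [ha, Finset.mem_singleton] at hv hx'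
    exact hx'.trans hv.symm
  set g : V → ℤ := fun u => if u = v then 2 else if u = r then -1 else f u with hg
  have hgv : g v = 2 := by simp [hg]
  have hgr : g r = -1 := by simp [hg, hrv]
  have hgother : ∀ u, u ≠ v → u ≠ r → g u = f u := by
    intro u h1 h2; simp [hg, h1, h2]
  obtain ⟨hf1, hf2, hf3⟩ := hf
  have hfilterr : Finset.univ.filter (fun w => G.Adj r w) = {v} := by
    ext w
    simp only [Finset.mem_filter, Finset.mem_univ, true_and, Finset.mem_singleton]
    exact ⟨huniq w, fun h => h ▸ hadj⟩
  refine ⟨⟨?_, ?_, ?_⟩, ?_⟩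
  · intro u
    by_cases h1 : u = v
    · subst h1; rw [hgv]; tauto
    by_cases h2 : u = r
    · subst h2; rw [hgr]; tauto
    · rw [hgother u h1 h2]; exact hf1 u
  · intro u
    by_cases hur : u = r
    · subst hur
      simp [closedNbrSum, hfilterr, hgr, hgv]
    by_cases huv : u = v
    · rw [huv]
      have hrmem : r ∈ Finset.univ.filter (fun w => G.Adj v w) := by
        simp [hadj.symm]
      have key : ∀ w ∈ (Finset.univ.filter (fun w => G.Adj v w)).erase r, g w = f w := by
        intro w hw
        obtain ⟨hwr, hw'⟩ := Finset.mem_erase.mp hw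
        have hwadj : G.Adj v w := (Finset.mem_filter.mp hw').2
        exact hgother w hwadj.ne' hwr
      have hs : ∑ w ∈ Finset.univ.filter (fun w => G.Adj v w), g w
          = ∑ w ∈ Finset.univ.filter (fun w => G.Adj v w), f w - 3 := by
        rw [← Finset.add_sum_erase _ g hrmem, ← Finset.add_sum_erase _ f hrmem,
          Finset.sum_congr rfl key, hgr, hfr]
        ring
      have hv2 := hf2 v
      unfold closedNbrSum at hv2 ⊢
      rw [hgv, hs]
      rw [hfv] at hv2
      linarith
    · have hle : closedNbrSum G f u ≤ closedNbrSum G g u := by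
        unfold closedNbrSum
        rw [hgother u huv hur]
        apply add_le_add_right
        apply Finset.sum_le_sum
        intro w hw
        have hwadj : G.Adj u w := (Finset.mem_filter.mp hw).2
        by_cases hwv : w = v
        · subst hwv; rw [hgv, hfv]; norm_num
        · have hwr : w ≠ r := by
            intro h; subst h
            exact huv (huniq u hwadj.symm)
          rw [hgother w hwv hwr]
      linarith [hf2 u]
  · intro u hgu
    by_cases huv : u = v
    · subst huv; rw [hgv] at hgu; exact absurd hgu (by norm_num)
    by_cases hur : u = r
    · subst hur; exact ⟨v, hadj, hgv⟩
    · rw [hgother u huv hur] at hgu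
      obtain ⟨w, hw1, hw2⟩ := hf3 u hgu
      have hwv : w ≠ v := fun h => by rw [h, hfv] at hw2; norm_num at hw2
      have hwr : w ≠ r := fun h => huv (huniq u (h ▸ hw1).symm)
      exact ⟨w, hw1, by rw [hgother w hwv hwr]; exact hw2⟩
  · unfold srdWeight
    have hmem : r ∈ Finset.univ.erase v := by simp [hrv]
    have key : ∀ w ∈ (Finset.univ.erase v).erase r, g w = f w := by
      intro w hw
      obtain ⟨hwr, hw'⟩ := Finset.mem_erase.mp hw
      exact hgother w (Finset.mem_erase.mp hw').1 hwr
    rw [← Finset.add_sum_erase _ g (Finset.mem_univ v),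
        ← Finset.add_sum_erase _ f (Finset.mem_univ v),
        ← Finset.add_sum_erase _ g hmem, ← Finset.add_sum_erase _ f hmem,
        Finset.sum_congr rfl key, hgv, hgr, hfv, hfr]
    ring
end
end

section
/- For every MRSS construction G, there exists a minimum-weight signed Roman dominating function f on G such that for every j ∈ [k], f(v) = 2 for every vertex v ∈ F_j and f(v) = −1 for every vertex v ∈ P_j. -/
open scoped Classical

noncomputable section

/-- The largest coordinate of a vector in `ℕ^k`. -/
def maxCoord {k : ℕ} (v : Fin k → ℕ) : ℕ := Finset.univ.sup v

/-- The size of the set `D_j`, namely `(∑ i, s_i(j)) + t(j)`. -/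
def dSize {k n : ℕ} (s : Fin n → Fin k → ℕ) (t : Fin k → ℕ) (j : Fin k) : ℕ :=
  (∑ i, s i j) + t j

/-- The size of the set `F_j`, namely `⌈((∑ i, s_i(j)) + t(j))/2⌉`. -/
def fSize {k n : ℕ} (s : Fin n → Fin k → ℕ) (t : Fin k → ℕ) (j : Fin k) : ℕ :=
  (dSize s t j + 1) / 2

/-- The vertices of the MRSS construction. -/
inductive MVert (k n : ℕ) (s : Fin n → Fin k → ℕ) (t : Fin k → ℕ) where
  | u (j : Fin k)
  | vv (j : Fin k)
  | r1 (j : Fin k)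
  | r2 (j : Fin k)
  | D (j : Fin k) (d : Fin (dSize s t j))
  | F (j : Fin k) (e : Fin (fSize s t j))
  | P (j : Fin k) (e : Fin (fSize s t j)) (b : Fin 2)
  | a (i : Fin n)
  | b (i : Fin n) (l : Fin (maxCoord (s i)))
  | c (i : Fin n) (l : Fin (maxCoord (s i)))
  | Z (i : Fin n) (l : Fin (maxCoord (s i))) (z : Fin 4)
  | w (i : Fin n) (l : Fin (maxCoord (s i)))
  | x (i : Fin n) (l : Fin (maxCoord (s i)))
  | y (i : Fin n) (l : Fin (maxCoord (s i)))
  | g (i : Fin n) (l : Fin (maxCoord (s i)))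
  | h (i : Fin n) (l : Fin (maxCoord (s i)))
  | p (i : Fin n) (l : Fin (maxCoord (s i)))
  | q (i : Fin n) (l : Fin (maxCoord (s i)))
  deriving DecidableEq, Fintype

/-- Edges of the MRSS construction (up to symmetrization). -/
def mrssRel {k n : ℕ} {s : Fin n → Fin k → ℕ} {t : Fin k → ℕ}
    (sel : ∀ _ : Fin k, ∀ i : Fin n, Finset (Fin (maxCoord (s i)))) :
    MVert k n s t → MVert k n s t → Prop
  | .u j, .r1 j' => j = j'
  | .vv j, .r2 j' => j = j'
  | .u j, .D j' _ => j = j'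
  | .vv j, .D j' _ => j = j'
  | .vv j, .F j' _ => j = j'
  | .F j e, .P j' e' _ => (⟨j, e⟩ : Σ j, Fin (fSize s t j)) = ⟨j', e'⟩
  | .b i l, .c i' l' => (⟨i, l⟩ : Σ i, Fin (maxCoord (s i))) = ⟨i', l'⟩
  | .a i, .b i' _ => i = i'
  | .b i l, .Z i' l' _ => (⟨i, l⟩ : Σ i, Fin (maxCoord (s i))) = ⟨i', l'⟩
  | .b i l, .w i' l' => (⟨i, l⟩ : Σ i, Fin (maxCoord (s i))) = ⟨i', l'⟩
  | .w i l, .x i' l' => (⟨i, l⟩ : Σ i, Fin (maxCoord (s i))) = ⟨i', l'⟩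
  | .x i l, .y i' l' => (⟨i, l⟩ : Σ i, Fin (maxCoord (s i))) = ⟨i', l'⟩
  | .c i l, .g i' l' => (⟨i, l⟩ : Σ i, Fin (maxCoord (s i))) = ⟨i', l'⟩
  | .g i l, .h i' l' => (⟨i, l⟩ : Σ i, Fin (maxCoord (s i))) = ⟨i', l'⟩
  | .c i l, .p i' l' => (⟨i, l⟩ : Σ i, Fin (maxCoord (s i))) = ⟨i', l'⟩
  | .p i l, .q i' l' => (⟨i, l⟩ : Σ i, Fin (maxCoord (s i))) = ⟨i', l'⟩
  | .u j, .c i l => l ∈ sel j i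
  | _, _ => False

/-- The MRSS construction (for the fixed choice `sel` of the neighbours of the
`u_j` among the vertices `c_i^l`). -/
def mrssGraph {k n : ℕ} (s : Fin n → Fin k → ℕ) (t : Fin k → ℕ)
    (sel : ∀ _ : Fin k, ∀ i : Fin n, Finset (Fin (maxCoord (s i)))) :
    SimpleGraph (MVert k n s t) :=
  SimpleGraph.fromRel (mrssRel sel)

/-- A minimum-weight signed Roman dominating function. -/
def IsMinSRDF {V : Type*} [Fintype V] (G : SimpleGraph V) (f : V → ℤ) : Prop :=
  IsSRDF G f ∧ ∀ g : V → ℤ, IsSRDF G g → srdWeight f ≤ srdWeight g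

namespace MRSSAux

/-- constant 1 is an SRDF -/
lemma srdf_one {V : Type*} [Fintype V] (G : SimpleGraph V) : IsSRDF G (fun _ => (1:ℤ)) := by
  refine ⟨fun v => Or.inr (Or.inl rfl), fun u => ?_, fun u h => by simp at h⟩
  unfold closedNbrSum
  have h : (0:ℤ) ≤ ∑ _v ∈ Finset.univ.filter (fun v => G.Adj u v), (1:ℤ) :=
    Finset.sum_nonneg (fun _ _ => by norm_num)
  exact le_add_of_nonneg_right h

lemma srdf_lower {V : Type*} [Fintype V] {G : SimpleGraph V} {f : V → ℤ} (hf : IsSRDF G f) :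
    -(Fintype.card V : ℤ) ≤ srdWeight f := by
  have h : (Finset.univ : Finset V).card • (-1 : ℤ) ≤ ∑ v, f v := by
    apply Finset.card_nsmul_le_sum
    intro v _
    rcases hf.1 v with h | h | h <;> omega
  simpa [srdWeight, Finset.card_univ, nsmul_eq_mul] using h

lemma exists_min_srdf {V : Type*} [Fintype V] (G : SimpleGraph V) :
    ∃ f : V → ℤ, IsMinSRDF G f := by
  obtain ⟨w, hw, hmin⟩ := Int.exists_least_of_bdd
    (P := fun w => ∃ f : V → ℤ, IsSRDF G f ∧ srdWeight f = w)
    ⟨-(Fintype.card V : ℤ), by rintro z ⟨f, hf, rfl⟩; exact srdf_lower hf⟩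
    ⟨srdWeight (fun _ => (1:ℤ)), (fun _ => (1:ℤ)), srdf_one G, rfl⟩
  obtain ⟨f, hf, rfl⟩ := hw
  exact ⟨f, hf, fun g hg => hmin _ ⟨g, hg, rfl⟩⟩

section Graph

variable {k n : ℕ} {s : Fin n → Fin k → ℕ} {t : Fin k → ℕ}
  (sel : ∀ _ : Fin k, ∀ i : Fin n, Finset (Fin (maxCoord (s i))))

set_option maxHeartbeats 2000000 in
lemma adj_r2 (j : Fin k) (z : MVert k n s t) :
    (mrssGraph s t sel).Adj (MVert.r2 j) z ↔ z = MVert.vv j := by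
  rw [mrssGraph, SimpleGraph.fromRel_adj]
  cases z <;> simp [mrssRel]

set_option maxHeartbeats 2000000 in
lemma adj_P (j : Fin k) (e : Fin (fSize s t j)) (b : Fin 2) (z : MVert k n s t) :
    (mrssGraph s t sel).Adj (MVert.P j e b) z ↔ z = MVert.F j e := by
  rw [mrssGraph, SimpleGraph.fromRel_adj]
  cases z <;> simp [mrssRel]

set_option maxHeartbeats 2000000 in
lemma adj_F (j : Fin k) (e : Fin (fSize s t j)) (z : MVert k n s t) :
    (mrssGraph s t sel).Adj (MVert.F j e) z ↔ (z = MVert.vv j ∨ ∃ b, z = MVert.P j e b) := by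
  rw [mrssGraph, SimpleGraph.fromRel_adj]
  cases z <;> simp [mrssRel] <;> aesop

set_option maxHeartbeats 2000000 in
lemma adj_vv (j : Fin k) (z : MVert k n s t) :
    (mrssGraph s t sel).Adj (MVert.vv j) z ↔
      (z = MVert.r2 j ∨ (∃ d, z = MVert.D j d) ∨ (∃ e, z = MVert.F j e)) := by
  rw [mrssGraph, SimpleGraph.fromRel_adj]
  cases z <;> simp [mrssRel] <;> aesop

lemma filter_r2 (j : Fin k) :
    Finset.univ.filter (fun z => (mrssGraph s t sel).Adj (MVert.r2 j) z) = {MVert.vv j} := by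
  ext z; simp [adj_r2 sel j z]

lemma filter_P (j : Fin k) (e : Fin (fSize s t j)) (b : Fin 2) :
    Finset.univ.filter (fun z => (mrssGraph s t sel).Adj (MVert.P j e b) z) = {MVert.F j e} := by
  ext z; simp [adj_P sel j e b z]

lemma filter_F (j : Fin k) (e : Fin (fSize s t j)) :
    Finset.univ.filter (fun z => (mrssGraph s t sel).Adj (MVert.F j e) z)
      = {MVert.vv j, MVert.P j e 0, MVert.P j e 1} := by
  ext z
  simp [adj_F sel j e z, Fin.exists_fin_two]

lemma filter_vv (j : Fin k) :
    Finset.univ.filter (fun z => (mrssGraph s t sel).Adj (MVert.vv j) z)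
      = insert (MVert.r2 j)
          ((Finset.univ.image (MVert.D j)) ∪ (Finset.univ.image (MVert.F j))) := by
  ext z
  simp only [Finset.mem_filter, Finset.mem_univ, true_and, Finset.mem_insert,
    Finset.mem_union, Finset.mem_image]
  rw [adj_vv sel j z]
  constructor
  · rintro (rfl | ⟨d, rfl⟩ | ⟨e, rfl⟩)
    · exact Or.inl rfl
    · exact Or.inr (Or.inl ⟨d, rfl⟩)
    · exact Or.inr (Or.inr ⟨e, rfl⟩)
  · rintro (rfl | ⟨d, rfl⟩ | ⟨e, rfl⟩)
    · exact Or.inl rfl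
    · exact Or.inr (Or.inl ⟨d, rfl⟩)
    · exact Or.inr (Or.inr ⟨e, rfl⟩)

/-- The modified SRDF. -/
def mrssModify (g : MVert k n s t → ℤ) : MVert k n s t → ℤ
  | .vv _ => 2
  | .r2 _ => -1
  | .F _ _ => 2
  | .P _ _ _ => -1
  | x => g x

variable (g : MVert k n s t → ℤ)

lemma modify_ge (hval : ∀ v, g v = -1 ∨ g v = 1 ∨ g v = 2) (v : MVert k n s t)
    (h1 : ∀ j, v ≠ MVert.r2 j) (h2 : ∀ j e b, v ≠ MVert.P j e b) :
    g v ≤ mrssModify g v := by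
  have hb : g v ≤ 2 := by rcases hval v with h | h | h <;> omega
  cases v <;>
    first
      | exact le_rfl
      | exact hb
      | exact absurd rfl (h1 _)
      | exact absurd rfl (h2 _ _ _)

lemma modify_eq (v : MVert k n s t)
    (hvv : ∀ j, v ≠ MVert.vv j) (hF : ∀ j e, v ≠ MVert.F j e)
    (h1 : ∀ j, v ≠ MVert.r2 j) (h2 : ∀ j e b, v ≠ MVert.P j e b) :
    mrssModify g v = g v := by
  cases v <;>
    first
      | rfl
      | exact absurd rfl (hvv _)
      | exact absurd rfl (hF _ _)
      | exact absurd rfl (h1 _)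
      | exact absurd rfl (h2 _ _ _)

lemma nbr_sum_mono (hval : ∀ v, g v = -1 ∨ g v = 1 ∨ g v = 2) (u : MVert k n s t)
    (hvv : ∀ j, u ≠ MVert.vv j) (hF : ∀ j e, u ≠ MVert.F j e)
    (hr2 : ∀ j, u ≠ MVert.r2 j) (hP : ∀ j e b, u ≠ MVert.P j e b) :
    closedNbrSum (mrssGraph s t sel) g u ≤ closedNbrSum (mrssGraph s t sel) (mrssModify g) u := by
  unfold closedNbrSum
  rw [modify_eq g u hvv hF hr2 hP]
  have key : ∀ z ∈ Finset.univ.filter (fun z => (mrssGraph s t sel).Adj u z),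
      g z ≤ mrssModify g z := by
    intro z hz
    rw [Finset.mem_filter] at hz
    refine modify_ge g hval z ?_ ?_
    · rintro j rfl; exact hvv j ((adj_r2 sel j u).mp hz.2.symm)
    · rintro j e b rfl; exact hF j e ((adj_P sel j e b u).mp hz.2.symm)
  have := Finset.sum_le_sum key
  omega

lemma witness_two (u : MVert k n s t)
    (hvv : ∀ j, u ≠ MVert.vv j) (hF : ∀ j e, u ≠ MVert.F j e)
    (v : MVert k n s t) (hadj : (mrssGraph s t sel).Adj u v) (hv : g v = 2) :
    mrssModify g v = 2 := by
  cases v <;>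
    first
      | rfl
      | exact absurd ((adj_r2 sel _ u).mp hadj.symm) (hvv _)
      | exact absurd ((adj_P sel _ _ _ u).mp hadj.symm) (hF _ _)
      | exact hv

end Graph

end MRSSAux
namespace MRSSAux
section Graph2

variable {k n : ℕ} {s : Fin n → Fin k → ℕ} {t : Fin k → ℕ}
  (sel : ∀ _ : Fin k, ∀ i : Fin n, Finset (Fin (maxCoord (s i))))
  (g : MVert k n s t → ℤ)

lemma gadget_nonneg (hg : IsSRDF (mrssGraph s t sel) g) (j : Fin k) (e : Fin (fSize s t j)) :
    0 ≤ g (MVert.F j e) + g (MVert.P j e 0) + g (MVert.P j e 1) := by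
  have h0 := hg.2.1 (MVert.P j e 0)
  have h1 := hg.2.1 (MVert.P j e 1)
  rw [closedNbrSum, filter_P, Finset.sum_singleton] at h0 h1
  have hf := hg.1 (MVert.F j e)
  omega

lemma vr_ge_one (hg : IsSRDF (mrssGraph s t sel) g) (j : Fin k) :
    1 ≤ g (MVert.vv j) + g (MVert.r2 j) := by
  have h := hg.2.1 (MVert.r2 j)
  rw [closedNbrSum, filter_r2, Finset.sum_singleton] at h
  omega

/-- index of the "touched" vertices -/
def idx : MVert k n s t → Option (Fin k)
  | .vv j => some j
  | .r2 j => some j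
  | .F j _ => some j
  | .P j _ _ => some j
  | _ => none

lemma weight_le (hg : IsSRDF (mrssGraph s t sel) g) :
    srdWeight (mrssModify g) ≤ srdWeight g := by
  classical
  set ρ : MVert k n s t → ℤ := fun v => g v - mrssModify g v with hρ
  have hgoal : ∑ v, ρ v = srdWeight g - srdWeight (mrssModify g) := by
    simp [hρ, srdWeight, Finset.sum_sub_distrib]
  set B : Fin k → Finset (MVert k n s t) := fun j =>
    insert (MVert.vv j) (insert (MVert.r2 j)
      ((Finset.univ.image (MVert.F j)) ∪
       (Finset.univ.image (fun p : Fin (fSize s t j) × Fin 2 => MVert.P j p.1 p.2)))) with hB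
  have hmem : ∀ (j : Fin k) (x : MVert k n s t), x ∈ B j → idx x = some j := by
    intro j x hx
    simp only [hB, Finset.mem_insert, Finset.mem_union, Finset.mem_image,
      Finset.mem_univ, true_and] at hx
    rcases hx with rfl | rfl | ⟨e, rfl⟩ | ⟨p, rfl⟩ <;> rfl
  have hdisj : (↑(Finset.univ : Finset (Fin k)) : Set (Fin k)).PairwiseDisjoint B := by
    intro j1 _ j2 _ hne
    rw [Function.onFun, Finset.disjoint_left]
    intro x h1 h2
    have e1 := hmem j1 x h1
    have e2 := hmem j2 x h2
    rw [e1] at e2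
    exact hne (Option.some.inj e2)
  have hsupp : ∀ x ∈ (Finset.univ : Finset (MVert k n s t)),
      x ∉ Finset.univ.biUnion B → ρ x = 0 := by
    intro x _ hx
    have hxB : ∀ j, x ∉ B j := fun j h => hx (Finset.mem_biUnion.mpr ⟨j, Finset.mem_univ j, h⟩)
    have hmod : mrssModify g x = g x := by
      refine modify_eq g x ?_ ?_ ?_ ?_
      · rintro j rfl; exact hxB j (by simp [hB])
      · rintro j e rfl; exact hxB j (by simp [hB])
      · rintro j rfl; exact hxB j (by simp [hB])
      · rintro j e b rfl
        exact hxB j (Finset.mem_insert_of_mem (Finset.mem_insert_of_mem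
          (Finset.mem_union_right _ (Finset.mem_image.mpr ⟨(e, b), Finset.mem_univ _, rfl⟩))))
    simp [hρ, hmod]
  have hblock : ∀ j : Fin k, 0 ≤ ∑ x ∈ B j, ρ x := by
    intro j
    have h1 : (MVert.vv j : MVert k n s t) ∉ insert (MVert.r2 j)
        ((Finset.univ.image (MVert.F j)) ∪
         (Finset.univ.image (fun p : Fin (fSize s t j) × Fin 2 => MVert.P j p.1 p.2))) := by
      simp
    have h2 : (MVert.r2 j : MVert k n s t) ∉
        ((Finset.univ.image (MVert.F j)) ∪
         (Finset.univ.image (fun p : Fin (fSize s t j) × Fin 2 => MVert.P j p.1 p.2))) := by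
      simp
    have h3 : Disjoint (Finset.univ.image (MVert.F j))
        (Finset.univ.image (fun p : Fin (fSize s t j) × Fin 2 => MVert.P j p.1 p.2)) := by
      rw [Finset.disjoint_left]
      rintro x hx hx'
      simp only [Finset.mem_image, Finset.mem_univ, true_and] at hx hx'
      obtain ⟨e, rfl⟩ := hx
      obtain ⟨p, hp⟩ := hx'
      exact absurd hp (by simp)
    have h4 : ∀ a ∈ (Finset.univ : Finset (Fin (fSize s t j))),
        ∀ b ∈ (Finset.univ : Finset (Fin (fSize s t j))), MVert.F j a = MVert.F j b → a = b := by
      intro a _ b _ h; simpa using h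
    have h5 : ∀ a ∈ (Finset.univ : Finset (Fin (fSize s t j) × Fin 2)),
        ∀ b ∈ (Finset.univ : Finset (Fin (fSize s t j) × Fin 2)),
        MVert.P j a.1 a.2 = MVert.P j b.1 b.2 → a = b := by
      intro a _ b _ h; cases a; cases b; simp_all
    rw [hB]
    rw [Finset.sum_insert h1, Finset.sum_insert h2, Finset.sum_union h3,
      Finset.sum_image h4, Finset.sum_image h5]
    have hvr := vr_ge_one sel g hg j
    have evv : ρ (MVert.vv j) = g (MVert.vv j) - 2 := rfl
    have er2 : ρ (MVert.r2 j) = g (MVert.r2 j) + 1 := by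
      show g (MVert.r2 j) - mrssModify g (MVert.r2 j) = _
      show g (MVert.r2 j) - (-1) = _
      ring
    have hprod : ∑ p : Fin (fSize s t j) × Fin 2, ρ (MVert.P j p.1 p.2)
        = ∑ e : Fin (fSize s t j), (ρ (MVert.P j e 0) + ρ (MVert.P j e 1)) := by
      rw [Fintype.sum_prod_type]
      refine Finset.sum_congr rfl (fun e _ => ?_)
      rw [Fin.sum_univ_two]
    have hcomb : 0 ≤ ∑ e : Fin (fSize s t j), ρ (MVert.F j e)
        + ∑ e : Fin (fSize s t j), (ρ (MVert.P j e 0) + ρ (MVert.P j e 1)) := by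
      rw [← Finset.sum_add_distrib]
      refine Finset.sum_nonneg (fun e _ => ?_)
      have hgad := gadget_nonneg sel g hg j e
      have eF : ρ (MVert.F j e) = g (MVert.F j e) - 2 := rfl
      have eP0 : ρ (MVert.P j e 0) = g (MVert.P j e 0) + 1 := by
        show g (MVert.P j e 0) - (-1) = _; ring
      have eP1 : ρ (MVert.P j e 1) = g (MVert.P j e 1) + 1 := by
        show g (MVert.P j e 1) - (-1) = _; ring
      omega
    rw [hprod] at *
    omega
  have hsum : ∑ v, ρ v = ∑ j : Fin k, ∑ x ∈ B j, ρ x := by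
    rw [← Finset.sum_subset (Finset.subset_univ (Finset.univ.biUnion B)) hsupp,
      Finset.sum_biUnion hdisj]
  have hnonneg : 0 ≤ ∑ v, ρ v := by
    rw [hsum]
    exact Finset.sum_nonneg (fun j _ => hblock j)
  omega

lemma cns_r2 (j : Fin k) :
    closedNbrSum (mrssGraph s t sel) (mrssModify g) (MVert.r2 j) = 1 := by
  rw [closedNbrSum, filter_r2, Finset.sum_singleton]
  show (-1 : ℤ) + 2 = 1
  norm_num

lemma cns_P (j : Fin k) (e : Fin (fSize s t j)) (b : Fin 2) :
    closedNbrSum (mrssGraph s t sel) (mrssModify g) (MVert.P j e b) = 1 := by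
  rw [closedNbrSum, filter_P, Finset.sum_singleton]
  show (-1 : ℤ) + 2 = 1
  norm_num

lemma cns_F (j : Fin k) (e : Fin (fSize s t j)) :
    closedNbrSum (mrssGraph s t sel) (mrssModify g) (MVert.F j e) = 2 := by
  rw [closedNbrSum, filter_F, Finset.sum_insert (by simp),
    Finset.sum_insert (by simp [Fin.ext_iff]), Finset.sum_singleton]
  show (2 : ℤ) + (2 + (-1 + -1)) = 2
  norm_num

lemma cns_vv (hval : ∀ v, g v = -1 ∨ g v = 1 ∨ g v = 2) (j : Fin k) :
    1 ≤ closedNbrSum (mrssGraph s t sel) (mrssModify g) (MVert.vv j) := by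
  have h1 : (MVert.r2 j : MVert k n s t) ∉
      ((Finset.univ.image (MVert.D j)) ∪ (Finset.univ.image (MVert.F j))) := by simp
  have h2 : Disjoint (Finset.univ.image (MVert.D j) : Finset (MVert k n s t))
      (Finset.univ.image (MVert.F j)) := by
    rw [Finset.disjoint_left]
    rintro x hx hx'
    simp only [Finset.mem_image, Finset.mem_univ, true_and] at hx hx'
    obtain ⟨d, rfl⟩ := hx
    obtain ⟨e, he⟩ := hx'
    exact absurd he (by simp)
  have h4 : ∀ a ∈ (Finset.univ : Finset (Fin (dSize s t j))),
      ∀ b ∈ (Finset.univ : Finset (Fin (dSize s t j))), MVert.D j a = MVert.D j b → a = b := by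
    intro a _ b _ h; simpa using h
  have h5 : ∀ a ∈ (Finset.univ : Finset (Fin (fSize s t j))),
      ∀ b ∈ (Finset.univ : Finset (Fin (fSize s t j))), MVert.F j a = MVert.F j b → a = b := by
    intro a _ b _ h; simpa using h
  rw [closedNbrSum, filter_vv, Finset.sum_insert h1, Finset.sum_union h2,
    Finset.sum_image h4, Finset.sum_image h5]
  have hD : -((dSize s t j : ℕ) : ℤ) ≤ ∑ d : Fin (dSize s t j), mrssModify g (MVert.D j d) := by
    have hle : (Finset.univ : Finset (Fin (dSize s t j))).card • (-1 : ℤ)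
        ≤ ∑ d : Fin (dSize s t j), mrssModify g (MVert.D j d) := by
      apply Finset.card_nsmul_le_sum
      intro d _
      have he : mrssModify g (MVert.D j d) = g (MVert.D j d) := rfl
      have := hval (MVert.D j d)
      omega
    simpa [Finset.card_univ, nsmul_eq_mul] using hle
  have hF : ∑ e : Fin (fSize s t j), mrssModify g (MVert.F j e)
      = 2 * ((fSize s t j : ℕ) : ℤ) := by
    have he : ∀ e, mrssModify g (MVert.F j e) = 2 := fun _ => rfl
    simp only [he, Finset.sum_const, Finset.card_univ, Fintype.card_fin, nsmul_eq_mul]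
    ring
  have hsize : (dSize s t j : ℕ) ≤ 2 * fSize s t j := by
    unfold fSize
    omega
  have evv : mrssModify g (MVert.vv j) = 2 := rfl
  have er2 : mrssModify g (MVert.r2 j) = -1 := rfl
  rw [evv, er2, hF]
  have hsize' : ((dSize s t j : ℕ) : ℤ) ≤ 2 * ((fSize s t j : ℕ) : ℤ) := by exact_mod_cast hsize
  omega

end Graph2
end MRSSAux
set_option maxHeartbeats 4000000 in
theorem mrss_min_srdf_F_P (k m n : ℕ) (hk : 1 ≤ k) (hm : 1 ≤ m) (hn : 1 ≤ n)
    (s : Fin n → Fin k → ℕ) (t : Fin k → ℕ) (hs : ∀ i, 1 ≤ maxCoord (s i))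
    (sel : ∀ _ : Fin k, ∀ i : Fin n, Finset (Fin (maxCoord (s i))))
    (hsel : ∀ j i, (sel j i).card = s i j) :
    ∃ f : MVert k n s t → ℤ, IsMinSRDF (mrssGraph s t sel) f ∧
      (∀ j e, f (MVert.F j e) = 2) ∧
      (∀ j e b, f (MVert.P j e b) = -1) := by

  classical
  obtain ⟨g, hS, hgmin⟩ := MRSSAux.exists_min_srdf (mrssGraph s t sel)
  refine ⟨MRSSAux.mrssModify g, ⟨⟨?_, ?_, ?_⟩, ?_⟩, fun j e => rfl, fun j e b => rfl⟩
  · intro v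
    cases v with
    | u j => exact hS.1 (MVert.u j)
    | vv j => exact Or.inr (Or.inr rfl)
    | r1 j => exact hS.1 (MVert.r1 j)
    | r2 j => exact Or.inl rfl
    | D j d => exact hS.1 (MVert.D j d)
    | F j e => exact Or.inr (Or.inr rfl)
    | P j e b0 => exact Or.inl rfl
    | a i => exact hS.1 (MVert.a i)
    | b i l => exact hS.1 (MVert.b i l)
    | c i l => exact hS.1 (MVert.c i l)
    | Z i l z => exact hS.1 (MVert.Z i l z)
    | w i l => exact hS.1 (MVert.w i l)
    | x i l => exact hS.1 (MVert.x i l)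
    | y i l => exact hS.1 (MVert.y i l)
    | g i l => exact hS.1 (MVert.g i l)
    | h i l => exact hS.1 (MVert.h i l)
    | p i l => exact hS.1 (MVert.p i l)
    | q i l => exact hS.1 (MVert.q i l)
  · intro u
    cases u with
    | u j =>
      exact le_trans (hS.2.1 (MVert.u j))
        (MRSSAux.nbr_sum_mono sel g hS.1 (MVert.u j) (by simp) (by simp) (by simp) (by simp))
    | vv j => exact MRSSAux.cns_vv sel g hS.1 j
    | r1 j =>
      exact le_trans (hS.2.1 (MVert.r1 j))
        (MRSSAux.nbr_sum_mono sel g hS.1 (MVert.r1 j) (by simp) (by simp) (by simp) (by simp))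
    | r2 j => exact le_of_eq (MRSSAux.cns_r2 sel g j).symm
    | D j d =>
      exact le_trans (hS.2.1 (MVert.D j d))
        (MRSSAux.nbr_sum_mono sel g hS.1 (MVert.D j d) (by simp) (by simp) (by simp) (by simp))
    | F j e =>
      have h := MRSSAux.cns_F sel g j e
      omega
    | P j e b0 => exact le_of_eq (MRSSAux.cns_P sel g j e b0).symm
    | a i =>
      exact le_trans (hS.2.1 (MVert.a i))
        (MRSSAux.nbr_sum_mono sel g hS.1 (MVert.a i) (by simp) (by simp) (by simp) (by simp))
    | b i l =>
      exact le_trans (hS.2.1 (MVert.b i l))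
        (MRSSAux.nbr_sum_mono sel g hS.1 (MVert.b i l) (by simp) (by simp) (by simp) (by simp))
    | c i l =>
      exact le_trans (hS.2.1 (MVert.c i l))
        (MRSSAux.nbr_sum_mono sel g hS.1 (MVert.c i l) (by simp) (by simp) (by simp) (by simp))
    | Z i l z =>
      exact le_trans (hS.2.1 (MVert.Z i l z))
        (MRSSAux.nbr_sum_mono sel g hS.1 (MVert.Z i l z) (by simp) (by simp) (by simp) (by simp))
    | w i l =>
      exact le_trans (hS.2.1 (MVert.w i l))
        (MRSSAux.nbr_sum_mono sel g hS.1 (MVert.w i l) (by simp) (by simp) (by simp) (by simp))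
    | x i l =>
      exact le_trans (hS.2.1 (MVert.x i l))
        (MRSSAux.nbr_sum_mono sel g hS.1 (MVert.x i l) (by simp) (by simp) (by simp) (by simp))
    | y i l =>
      exact le_trans (hS.2.1 (MVert.y i l))
        (MRSSAux.nbr_sum_mono sel g hS.1 (MVert.y i l) (by simp) (by simp) (by simp) (by simp))
    | g i l =>
      exact le_trans (hS.2.1 (MVert.g i l))
        (MRSSAux.nbr_sum_mono sel g hS.1 (MVert.g i l) (by simp) (by simp) (by simp) (by simp))
    | h i l =>
      exact le_trans (hS.2.1 (MVert.h i l))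
        (MRSSAux.nbr_sum_mono sel g hS.1 (MVert.h i l) (by simp) (by simp) (by simp) (by simp))
    | p i l =>
      exact le_trans (hS.2.1 (MVert.p i l))
        (MRSSAux.nbr_sum_mono sel g hS.1 (MVert.p i l) (by simp) (by simp) (by simp) (by simp))
    | q i l =>
      exact le_trans (hS.2.1 (MVert.q i l))
        (MRSSAux.nbr_sum_mono sel g hS.1 (MVert.q i l) (by simp) (by simp) (by simp) (by simp))
  · intro u hu
    cases u with
    | u j =>
      have hu' : g (MVert.u j) = -1 := hu
      obtain ⟨v, hadj, hv2⟩ := hS.2.2 (MVert.u j) hu'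
      exact ⟨v, hadj, MRSSAux.witness_two sel g (MVert.u j) (by simp) (by simp) v hadj hv2⟩
    | vv j =>
      have hu' : (2:ℤ) = -1 := hu
      omega
    | r1 j =>
      have hu' : g (MVert.r1 j) = -1 := hu
      obtain ⟨v, hadj, hv2⟩ := hS.2.2 (MVert.r1 j) hu'
      exact ⟨v, hadj, MRSSAux.witness_two sel g (MVert.r1 j) (by simp) (by simp) v hadj hv2⟩
    | r2 j => exact ⟨MVert.vv j, (MRSSAux.adj_r2 sel j (MVert.vv j)).mpr rfl, rfl⟩
    | D j d =>
      have hu' : g (MVert.D j d) = -1 := hu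
      obtain ⟨v, hadj, hv2⟩ := hS.2.2 (MVert.D j d) hu'
      exact ⟨v, hadj, MRSSAux.witness_two sel g (MVert.D j d) (by simp) (by simp) v hadj hv2⟩
    | F j e =>
      have hu' : (2:ℤ) = -1 := hu
      omega
    | P j e b0 => exact ⟨MVert.F j e, (MRSSAux.adj_P sel j e b0 (MVert.F j e)).mpr rfl, rfl⟩
    | a i =>
      have hu' : g (MVert.a i) = -1 := hu
      obtain ⟨v, hadj, hv2⟩ := hS.2.2 (MVert.a i) hu'
      exact ⟨v, hadj, MRSSAux.witness_two sel g (MVert.a i) (by simp) (by simp) v hadj hv2⟩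
    | b i l =>
      have hu' : g (MVert.b i l) = -1 := hu
      obtain ⟨v, hadj, hv2⟩ := hS.2.2 (MVert.b i l) hu'
      exact ⟨v, hadj, MRSSAux.witness_two sel g (MVert.b i l) (by simp) (by simp) v hadj hv2⟩
    | c i l =>
      have hu' : g (MVert.c i l) = -1 := hu
      obtain ⟨v, hadj, hv2⟩ := hS.2.2 (MVert.c i l) hu'
      exact ⟨v, hadj, MRSSAux.witness_two sel g (MVert.c i l) (by simp) (by simp) v hadj hv2⟩
    | Z i l z =>
      have hu' : g (MVert.Z i l z) = -1 := hu
      obtain ⟨v, hadj, hv2⟩ := hS.2.2 (MVert.Z i l z) hu'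
      exact ⟨v, hadj, MRSSAux.witness_two sel g (MVert.Z i l z) (by simp) (by simp) v hadj hv2⟩
    | w i l =>
      have hu' : g (MVert.w i l) = -1 := hu
      obtain ⟨v, hadj, hv2⟩ := hS.2.2 (MVert.w i l) hu'
      exact ⟨v, hadj, MRSSAux.witness_two sel g (MVert.w i l) (by simp) (by simp) v hadj hv2⟩
    | x i l =>
      have hu' : g (MVert.x i l) = -1 := hu
      obtain ⟨v, hadj, hv2⟩ := hS.2.2 (MVert.x i l) hu'
      exact ⟨v, hadj, MRSSAux.witness_two sel g (MVert.x i l) (by simp) (by simp) v hadj hv2⟩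
    | y i l =>
      have hu' : g (MVert.y i l) = -1 := hu
      obtain ⟨v, hadj, hv2⟩ := hS.2.2 (MVert.y i l) hu'
      exact ⟨v, hadj, MRSSAux.witness_two sel g (MVert.y i l) (by simp) (by simp) v hadj hv2⟩
    | g i l =>
      have hu' : g (MVert.g i l) = -1 := hu
      obtain ⟨v, hadj, hv2⟩ := hS.2.2 (MVert.g i l) hu'
      exact ⟨v, hadj, MRSSAux.witness_two sel g (MVert.g i l) (by simp) (by simp) v hadj hv2⟩
    | h i l =>
      have hu' : g (MVert.h i l) = -1 := hu
      obtain ⟨v, hadj, hv2⟩ := hS.2.2 (MVert.h i l) hu'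
      exact ⟨v, hadj, MRSSAux.witness_two sel g (MVert.h i l) (by simp) (by simp) v hadj hv2⟩
    | p i l =>
      have hu' : g (MVert.p i l) = -1 := hu
      obtain ⟨v, hadj, hv2⟩ := hS.2.2 (MVert.p i l) hu'
      exact ⟨v, hadj, MRSSAux.witness_two sel g (MVert.p i l) (by simp) (by simp) v hadj hv2⟩
    | q i l =>
      have hu' : g (MVert.q i l) = -1 := hu
      obtain ⟨v, hadj, hv2⟩ := hS.2.2 (MVert.q i l) hu'
      exact ⟨v, hadj, MRSSAux.witness_two sel g (MVert.q i l) (by simp) (by simp) v hadj hv2⟩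
  · intro h hh
    exact le_trans (MRSSAux.weight_le sel g hS) (hgmin h hh)
end
end
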